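/- Let M_u ≥ 0 and let v : ℝ → ℝ be nonnegative and integrable on [0, ξ]. Define Δ₀(ξ) := (1/2) ∫₀^ξ v(η) dη, g(η) := (M_u/2) ∫₀^η (η − ζ) v(ζ) dζ, and d(ξ) := ∫₀^ξ (1 + v(η))/(2 (1 + g(η))²) dη − ξ/2. Then d(ξ) ≥ Δ₀(ξ) · [1 − (M_u/2) ξ² − M_u ξ Δ₀(ξ)]. -/

import Mathlib

open MeasureTheory intervalIntegral Real Set

/-- Key identity: the integral of `v` times its primitive equals half the
square of the primitive. -/



lemma primitive_sq_half (ξ : ℝ) (hξ : 0 ≤ ξ) (v : ℝ → ℝ)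
    (hv : IntervalIntegrable v MeasureTheory.volume 0 ξ) :
    ∫ η in (0:ℝ)..ξ, v η * ∫ ζ in (0:ℝ)..η, v ζ
      = (∫ η in (0:ℝ)..ξ, v η)^2 / 2 := by
  set μ := MeasureTheory.volume.restrict (Ioc (0:ℝ) ξ) with hμ
  have hvμ : Integrable v μ := by
    rw [hμ]
    exact (intervalIntegrable_iff_integrableOn_Ioc_of_le hξ).mp hv
  have hprod : Integrable (fun p : ℝ × ℝ => v p.1 * v p.2) (μ.prod μ) :=
    hvμ.mul_prod hvμ
  have hsmeas : MeasurableSet {p : ℝ × ℝ | p.2 ≤ p.1} :=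
    measurableSet_le measurable_snd measurable_fst
  set f : ℝ × ℝ → ℝ := {p : ℝ × ℝ | p.2 ≤ p.1}.indicator (fun p => v p.1 * v p.2) with hfdef
  have hf : Integrable f (μ.prod μ) := hprod.indicator hsmeas
  set V : ℝ → ℝ := fun x => ∫ ζ in (0:ℝ)..x, v ζ with hVdef
  set T : ℝ := ∫ η in (0:ℝ)..ξ, v η with hTdef
  have hVcont : ContinuousOn V (uIcc (0:ℝ) ξ) :=
    continuousOn_primitive_interval' hv left_mem_uIcc
  have hvV : IntervalIntegrable (fun ζ => v ζ * V ζ) MeasureTheory.volume 0 ξ :=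
    hv.mul_continuousOn hVcont
  have hvVμ : Integrable (fun ζ => v ζ * V ζ) μ :=
    (intervalIntegrable_iff_integrableOn_Ioc_of_le hξ).mp hvV
  -- first iterated integral
  have h1 : ∫ p, f p ∂(μ.prod μ) = ∫ η, v η * V η ∂μ := by
    rw [integral_prod f hf]
    refine setIntegral_congr_fun measurableSet_Ioc (fun η hη => ?_)
    have hinner : (fun ζ => f (η, ζ)) = (Iic η).indicator (fun ζ => v η * v ζ) := by
      funext ζ
      by_cases h : ζ ≤ η
      · simp [hfdef, indicator_of_mem, h, mem_Iic.mpr h, Set.indicator_apply]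
      · simp [hfdef, h, Set.indicator_apply]
    rw [hinner, MeasureTheory.integral_indicator measurableSet_Iic, hμ,
      Measure.restrict_restrict measurableSet_Iic]
    have hset : Iic η ∩ Ioc 0 ξ = Ioc 0 η := by
      ext x
      simp only [mem_inter_iff, mem_Iic, mem_Ioc]
      constructor
      · rintro ⟨h1, h2, h3⟩; exact ⟨h2, h1⟩
      · rintro ⟨h1, h2⟩; exact ⟨h2, h1, h2.trans (le_trans hη.2 le_rfl)⟩
    rw [hset, MeasureTheory.integral_const_mul,
      ← intervalIntegral.integral_of_le hη.1.le]
  -- second iterated integral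
  have h2 : ∫ p, f p ∂(μ.prod μ) = ∫ ζ, (T - V ζ) * v ζ ∂μ := by
    rw [integral_prod_symm f hf]
    refine setIntegral_congr_fun measurableSet_Ioc (fun ζ hζ => ?_)
    have hinner : (fun η => f (η, ζ)) = (Ici ζ).indicator (fun η => v η * v ζ) := by
      funext η
      by_cases h : ζ ≤ η
      · simp [hfdef, h, Set.indicator_apply]
      · simp [hfdef, h, Set.indicator_apply]
    rw [hinner, MeasureTheory.integral_indicator measurableSet_Ici, hμ,
      Measure.restrict_restrict measurableSet_Ici]
    have hset : Ici ζ ∩ Ioc 0 ξ = Icc ζ ξ := by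
      ext x
      simp only [mem_inter_iff, mem_Ici, mem_Ioc, mem_Icc]
      constructor
      · rintro ⟨h1, _, h3⟩; exact ⟨h1, h3⟩
      · rintro ⟨h1, h2⟩; exact ⟨h1, lt_of_lt_of_le hζ.1 h1, h2⟩
    rw [hset, MeasureTheory.integral_Icc_eq_integral_Ioc,
      ← intervalIntegral.integral_of_le hζ.2]
    have hv0ζ : IntervalIntegrable v MeasureTheory.volume 0 ζ :=
      hv.mono_set (by
        rw [uIcc_of_le hζ.1.le, uIcc_of_le hξ]
        exact Icc_subset_Icc le_rfl hζ.2)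
    have hIζ : IntervalIntegrable (fun η => v η * v ζ) MeasureTheory.volume 0 ζ :=
      hv0ζ.mul_const _
    have hIξ : IntervalIntegrable (fun η => v η * v ζ) MeasureTheory.volume 0 ξ :=
      hv.mul_const _
    rw [← integral_interval_sub_left hIξ hIζ, intervalIntegral.integral_mul_const,
      intervalIntegral.integral_mul_const, ← sub_mul]
  -- combine
  have h3 : ∫ ζ, (T - V ζ) * v ζ ∂μ = T * T - ∫ ζ, v ζ * V ζ ∂μ := by
    have : (fun ζ => (T - V ζ) * v ζ) = (fun ζ => T * v ζ - v ζ * V ζ) := by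
      funext ζ; ring
    rw [this, integral_sub (hvμ.const_mul T) hvVμ, MeasureTheory.integral_const_mul]
    congr 1
    rw [hTdef, intervalIntegral.integral_of_le hξ]
  have hkey : ∫ ζ, v ζ * V ζ ∂μ = T^2 / 2 := by
    have := h1.symm.trans (h2.trans h3)
    nlinarith [this]
  rw [intervalIntegral.integral_of_le hξ]
  exact hkey

set_option maxHeartbeats 1000000 in
/-- Lemma 2 of the paper: the lower bound `d` on the displacement satisfies
`d(ξ) ≥ Δ₀(ξ) [1 − (M_u/2) ξ² − M_u ξ Δ₀(ξ)]`. -/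
theorem d_easy_lower_bound
    (Mu ξ : ℝ) (hMu : 0 ≤ Mu) (hξ : 0 ≤ ξ)
    (v : ℝ → ℝ) (hv_nonneg : ∀ x, 0 ≤ v x)
    (hv : IntervalIntegrable v MeasureTheory.volume 0 ξ) :
    ((∫ η in (0:ℝ)..ξ,
        (1 + v η) / (2 * (1 + (Mu / 2) * ∫ ζ in (0:ℝ)..η, (η - ζ) * v ζ)^2))
      - ξ / 2)
    ≥ ((1/2) * ∫ η in (0:ℝ)..ξ, v η) *
        (1 - (Mu / 2) * ξ^2 - Mu * ξ * ((1/2) * ∫ η in (0:ℝ)..ξ, v η)) := by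
  classical
  set V : ℝ → ℝ := fun x => ∫ t in (0:ℝ)..x, v t with hVdef
  set W : ℝ → ℝ := fun x => ∫ t in (0:ℝ)..x, t * v t with hWdef
  have hVcont : ContinuousOn V (uIcc (0:ℝ) ξ) :=
    continuousOn_primitive_interval' hv left_mem_uIcc
  have hid : IntervalIntegrable (fun t : ℝ => t * v t) MeasureTheory.volume 0 ξ :=
    hv.continuousOn_mul continuous_id.continuousOn
  have hWcont : ContinuousOn W (uIcc (0:ℝ) ξ) :=
    continuousOn_primitive_interval' hid left_mem_uIcc
  have hvsub : ∀ c ∈ Icc (0:ℝ) ξ, IntervalIntegrable v MeasureTheory.volume 0 c := by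
    intro c hc
    exact hv.mono_set (by rw [uIcc_of_le hc.1, uIcc_of_le hξ]; exact Icc_subset_Icc le_rfl hc.2)
  -- rewrite the inner integral as a difference of primitives
  have hG : ∀ η ∈ Icc (0:ℝ) ξ, (∫ ζ in (0:ℝ)..η, (η - ζ) * v ζ) = η * V η - W η := by
    intro η hη
    have h1 : IntervalIntegrable (fun ζ => η * v ζ) MeasureTheory.volume 0 η :=
      (hvsub η hη).const_mul η
    have h2 : IntervalIntegrable (fun ζ => ζ * v ζ) MeasureTheory.volume 0 η :=
      (hvsub η hη).continuousOn_mul continuous_id.continuousOn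
    calc ∫ ζ in (0:ℝ)..η, (η - ζ) * v ζ
        = ∫ ζ in (0:ℝ)..η, (η * v ζ - ζ * v ζ) := by
          apply intervalIntegral.integral_congr
          intro ζ _
          ring
      _ = η * V η - W η := by
          rw [intervalIntegral.integral_sub h1 h2, intervalIntegral.integral_const_mul]
  set g : ℝ → ℝ := fun η => 1 + (Mu/2) * (η * V η - W η) with hgdef
  have hLHS : (∫ η in (0:ℝ)..ξ,
        (1 + v η) / (2 * (1 + (Mu / 2) * ∫ ζ in (0:ℝ)..η, (η - ζ) * v ζ)^2))
      = ∫ η in (0:ℝ)..ξ, (1 + v η) / (2 * (g η)^2) := by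
    apply intervalIntegral.integral_congr
    intro η hη
    rw [uIcc_of_le hξ] at hη
    show (1 + v η) / (2 * (1 + Mu / 2 * ∫ ζ in (0:ℝ)..η, (η - ζ) * v ζ) ^ 2)
        = (1 + v η) / (2 * g η ^ 2)
    rw [hG η hη]
  -- facts on [0, ξ]
  have hAnn : ∀ η ∈ Icc (0:ℝ) ξ, 0 ≤ η * V η - W η := by
    intro η hη
    rw [← hG η hη]
    apply intervalIntegral.integral_nonneg hη.1
    intro u hu
    exact mul_nonneg (by linarith [hu.2]) (hv_nonneg u)
  have hWnn : ∀ η ∈ Icc (0:ℝ) ξ, 0 ≤ W η := by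
    intro η hη
    apply intervalIntegral.integral_nonneg hη.1
    intro u hu
    exact mul_nonneg hu.1 (hv_nonneg u)
  have hVnn : ∀ η ∈ Icc (0:ℝ) ξ, 0 ≤ V η := by
    intro η hη
    exact intervalIntegral.integral_nonneg hη.1 (fun u _ => hv_nonneg u)
  have hVle : ∀ η ∈ Icc (0:ℝ) ξ, V η ≤ V ξ := by
    intro η hη
    have h1 : V ξ - V η = ∫ t in η..ξ, v t :=
      (integral_interval_sub_left hv (hvsub η hη)).symm ▸ rfl
    have h2 : 0 ≤ ∫ t in η..ξ, v t :=
      intervalIntegral.integral_nonneg hη.2 (fun u _ => hv_nonneg u)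
    linarith [h1 ▸ h2]
  have hgpos : ∀ η ∈ Icc (0:ℝ) ξ, 0 < g η := by
    intro η hη
    have := hAnn η hη
    have : 0 ≤ (Mu/2) * (η * V η - W η) := mul_nonneg (by linarith) this
    simp only [hgdef]
    linarith
  -- integrabilities
  have hvV : IntervalIntegrable (fun η => v η * V η) MeasureTheory.volume 0 ξ :=
    hv.mul_continuousOn hVcont
  have c1 : IntervalIntegrable (fun _ : ℝ => (1:ℝ)/2) MeasureTheory.volume 0 ξ :=
    intervalIntegrable_const
  have c2 : IntervalIntegrable (fun η => v η / 2) MeasureTheory.volume 0 ξ :=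
    hv.div_const 2
  have c3 : IntervalIntegrable (fun η : ℝ => η * V ξ) MeasureTheory.volume 0 ξ :=
    (continuous_id.mul continuous_const).intervalIntegrable _ _
  have c4 : IntervalIntegrable (fun η => ξ * (v η * V η)) MeasureTheory.volume 0 ξ :=
    hvV.const_mul ξ
  set F : ℝ → ℝ := fun η => 1/2 + v η / 2 - (Mu/2) * (η * V ξ + ξ * (v η * V η)) with hFdef
  have c5 : IntervalIntegrable (fun η => (Mu/2) * (η * V ξ + ξ * (v η * V η)))
      MeasureTheory.volume 0 ξ := (c3.add c4).const_mul _
  have hF_int : IntervalIntegrable F MeasureTheory.volume 0 ξ := (c1.add c2).sub c5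
  have hgcont : ContinuousOn g (uIcc (0:ℝ) ξ) := by
    apply continuousOn_const.add
    exact continuousOn_const.mul ((continuousOn_id.mul hVcont).sub hWcont)
  have hL_int : IntervalIntegrable (fun η => (1 + v η) / (2 * (g η)^2))
      MeasureTheory.volume 0 ξ := by
    have heq : (fun η => (1 + v η) / (2 * (g η)^2))
        = fun η => (1 + v η) * (2 * (g η)^2)⁻¹ := by
      funext η; rw [div_eq_mul_inv]
    rw [heq]
    apply (intervalIntegrable_const.add hv).mul_continuousOn
    apply ContinuousOn.inv₀ (continuousOn_const.mul (hgcont.pow 2))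
    intro η hη
    rw [uIcc_of_le hξ] at hη
    have := hgpos η hη
    exact mul_ne_zero two_ne_zero (pow_ne_zero 2 this.ne')
  -- pointwise inequality
  have key : ∀ η ∈ Icc (0:ℝ) ξ, F η ≤ (1 + v η) / (2 * (g η)^2) := by
    intro η hη
    have hA0 := hAnn η hη
    have hW0 := hWnn η hη
    have hVn := hVnn η hη
    have hVl := hVle η hη
    have hvn := hv_nonneg η
    have hη1 := hη.1
    have hη2 := hη.2
    set G : ℝ := (Mu/2) * (η * V η - W η) with hGdef
    have hG0 : 0 ≤ G := mul_nonneg (by linarith) hA0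
    have hgη : g η = 1 + G := rfl
    have h2g : (0:ℝ) < 2 * (g η)^2 := by rw [hgη]; positivity
    rw [le_div_iff₀ h2g, hgη]
    have e1 : G ≤ (Mu/2) * (η * V η) := by nlinarith
    have e2 : (Mu/2) * (η * V η) ≤ (Mu/2) * (η * V ξ) := by
      nlinarith [mul_nonneg (mul_nonneg hMu hη1) (sub_nonneg.mpr hVl)]
    have e3 : v η * G ≤ v η * ((Mu/2) * (η * V η)) := mul_le_mul_of_nonneg_left e1 hvn
    have e4 : v η * ((Mu/2) * (η * V η)) ≤ (Mu/2) * (ξ * (v η * V η)) := by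
      nlinarith [mul_nonneg (mul_nonneg (mul_nonneg hMu hvn) hVn) (sub_nonneg.mpr hη2)]
    have hc : (1 + v η) * G ≤ (Mu/2) * (η * V ξ + ξ * (v η * V η)) := by nlinarith
    have hpoly : (1 - 2*G) * (1 + G)^2 ≤ 1 := by nlinarith [sq_nonneg G]
    have hcm : (1 + v η) * G * (2 * (1+G)^2)
        ≤ (Mu/2) * (η * V ξ + ξ * (v η * V η)) * (2 * (1+G)^2) := by
      apply mul_le_mul_of_nonneg_right hc
      positivity
    have hpm : (1 + v η) * ((1 - 2*G) * (1 + G)^2) ≤ (1 + v η) * 1 :=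
      mul_le_mul_of_nonneg_left hpoly (by linarith)
    simp only [hFdef]
    nlinarith [hcm, hpm]
  have hmono : (∫ η in (0:ℝ)..ξ, F η) ≤ ∫ η in (0:ℝ)..ξ, (1 + v η) / (2 * (g η)^2) :=
    intervalIntegral.integral_mono_on hξ hF_int hL_int key
  -- value of ∫ F
  have hFval : (∫ η in (0:ℝ)..ξ, F η)
      = ξ/2 + (V ξ)/2 - (Mu/2) * ((ξ^2/2) * V ξ + ξ * ((V ξ)^2/2)) := by
    simp only [hFdef]
    rw [intervalIntegral.integral_sub (c1.add c2) c5,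
      intervalIntegral.integral_add c1 c2,
      intervalIntegral.integral_const_mul,
      intervalIntegral.integral_add c3 c4,
      intervalIntegral.integral_mul_const, integral_id,
      intervalIntegral.integral_const_mul,
      intervalIntegral.integral_div, primitive_sq_half ξ hξ v hv]
    simp only [intervalIntegral.integral_const, smul_eq_mul, sub_zero]
    norm_num
    rfl
  have hVξ : (∫ η in (0:ℝ)..ξ, v η) = V ξ := rfl
  rw [ge_iff_le, hLHS, hVξ]
  have hring : ((1/2) * V ξ) * (1 - (Mu/2) * ξ^2 - Mu * ξ * ((1/2) * V ξ))
      = (ξ/2 + (V ξ)/2 - (Mu/2) * ((ξ^2/2) * V ξ + ξ * ((V ξ)^2/2))) - ξ/2 := by ring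
  rw [hring, ← hFval]
  linarith [hmono]
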